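/- Let (m_k)_{k∈ℕ} be positive reals and (c_k)_{k∈ℕ} ⊂ ℝ³ with |c_i − c_j| ≥ 5 for i ≠ j and Σ_k m_k/(1+|c_k|) < ∞, and set v(x) = 1 + Σ_k m_k/(2|x − c_k|). Then on the open set U = ℝ³ \ {c_k : k ∈ ℕ}, the Euclidean Laplacian of log(v⁴) equals −4·|∇v|²/v²; in particular Δ(log(v⁴)) ≤ 0 on U, i.e. log of the Brill–Lindquist conformal factor raised to the fourth power is superharmonic on U. -/

import Mathlib

open scoped BigOperators

open scoped RealInnerProductSpace

section aux
variable {E : Type*} [NormedAddCommGroup E] [InnerProductSpace ℝ E]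

lemma auxA {c x : E} (h : x ≠ c) :
    HasFDerivAt (fun y => ‖y - c‖⁻¹)
      ((-(‖x - c‖ ^ 3)⁻¹) • innerSL ℝ (x - c)) x := by
  have hw : x - c ≠ 0 := sub_ne_zero.mpr h
  have hr : (0:ℝ) < ‖x - c‖ := norm_pos_iff.mpr hw
  have h1 : HasFDerivAt (fun y : E => y - c) (ContinuousLinearMap.id ℝ E) x :=
    (hasFDerivAt_id x).sub_const c
  have h2 := h1.norm_sq
  have hq : ‖x - c‖ ^ 2 ≠ 0 := pow_ne_zero _ hr.ne'
  have h3 := (Real.hasDerivAt_sqrt hq).comp_hasFDerivAt x h2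
  simp only [Function.comp_def] at h3
  have hfun : (fun y : E => Real.sqrt (‖y - c‖ ^ 2)) = fun y : E => ‖y - c‖ :=
    funext fun y => Real.sqrt_sq (norm_nonneg _)
  rw [hfun, Real.sqrt_sq (norm_nonneg _)] at h3
  have h4 := (hasDerivAt_inv hr.ne').comp_hasFDerivAt x h3
  simp only [Function.comp_def] at h4
  refine h4.congr_fderiv ?_
  ext z
  simp only [ContinuousLinearMap.smul_apply, ContinuousLinearMap.coe_smul',
    Pi.smul_apply, ContinuousLinearMap.coe_comp', Function.comp_apply,
    ContinuousLinearMap.coe_id', id_eq, innerSL_apply_apply, smul_eq_mul]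
  field_simp
  ring


lemma auxB (e : E) {c x : E} (h : x ≠ c) :
    HasFDerivAt (fun y => (‖y - c‖ ^ 3)⁻¹ * ⟪y - c, e⟫)
      ((-3 * (‖x - c‖ ^ 5)⁻¹ * ⟪x - c, e⟫) • innerSL ℝ (x - c)
        + (‖x - c‖ ^ 3)⁻¹ • innerSL ℝ e) x := by
  have hw : x - c ≠ 0 := sub_ne_zero.mpr h
  have hr : (0:ℝ) < ‖x - c‖ := norm_pos_iff.mpr hw
  have ha := (hasDerivAt_pow 3 (‖x - c‖⁻¹)).comp_hasFDerivAt x (auxA h)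
  simp only [Function.comp_def] at ha
  have hb : HasFDerivAt (fun y : E => ⟪y - c, e⟫) (innerSL ℝ e) x := by
    have h1 : HasFDerivAt (fun y : E => y - c) (ContinuousLinearMap.id ℝ E) x :=
      (hasFDerivAt_id x).sub_const c
    have h2 := ((innerSL ℝ e).hasFDerivAt (x := x - c)).comp x h1
    simp only [Function.comp_def] at h2
    have hfun : (fun y : E => (innerSL ℝ e) (y - c)) = fun y : E => ⟪y - c, e⟫ :=
      funext fun y => real_inner_comm _ _
    rwa [hfun, ContinuousLinearMap.comp_id] at h2
  have hmul := ha.mul hb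
  have hfun2 : (fun y : E => (‖y - c‖⁻¹) ^ 3 * ⟪y - c, e⟫)
      = fun y : E => (‖y - c‖ ^ 3)⁻¹ * ⟪y - c, e⟫ := by
    funext y; rw [inv_pow]
  change HasFDerivAt (fun y : E => (‖y - c‖⁻¹) ^ 3 * ⟪y - c, e⟫) _ x at hmul
  rw [hfun2] at hmul
  refine hmul.congr_fderiv ?_
  ext z
  simp only [ContinuousLinearMap.add_apply, ContinuousLinearMap.smul_apply,
    innerSL_apply_apply, smul_eq_mul, ContinuousLinearMap.coe_smul', Pi.smul_apply]
  field_simp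
  have h5 : ‖x - c‖ ^ 2 * ‖x - c‖⁻¹ ^ 2 = 1 := by
    rw [← mul_pow, mul_inv_cancel₀ hr.ne', one_pow]
  linear_combination (-3 * ⟪x - c, e⟫ * ⟪x - c, z⟫) * h5


noncomputable def BLD (m : ℝ) (c y : E) : E →L[ℝ] ℝ :=
  ((m / 2) * -(‖y - c‖ ^ 3)⁻¹) • innerSL ℝ (y - c)

lemma BLD_apply (m : ℝ) (c y z : E) :
    BLD m c y z = ((m / 2) * -(‖y - c‖ ^ 3)⁻¹) * ⟪y - c, z⟫ := by
  rw [BLD, ContinuousLinearMap.smul_apply, innerSL_apply_apply, smul_eq_mul]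

lemma BLD_hasFDerivAt (m : ℝ) {c y : E} (h : y ≠ c) :
    HasFDerivAt (fun z => m / (2 * ‖z - c‖)) (BLD m c y) y := by
  have h1 := (auxA h).const_mul (m / 2)
  have hfun : (fun z : E => m / 2 * ‖z - c‖⁻¹) = fun z => m / (2 * ‖z - c‖) := by
    funext z; rw [div_mul_eq_div_div]; ring
  rw [hfun] at h1
  refine h1.congr_fderiv ?_
  rw [BLD, smul_smul]

lemma BLD_norm_le {m ε : ℝ} (hm : 0 ≤ m) {c y : E} (hε : 0 < ε) (hεr : ε ≤ ‖y - c‖) :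
    ‖BLD m c y‖ ≤ m / ε ^ 2 := by
  have hr : (0:ℝ) < ‖y - c‖ := lt_of_lt_of_le hε hεr
  rw [BLD, norm_smul (β := E →L[ℝ] ℝ) _ _, innerSL_apply_norm, Real.norm_eq_abs, abs_mul,
    abs_neg, abs_inv, abs_pow, abs_norm, abs_of_nonneg (by positivity : (0:ℝ) ≤ m / 2)]
  have e1 : m / 2 * (‖y - c‖ ^ 3)⁻¹ * ‖y - c‖ = m / 2 / ‖y - c‖ ^ 2 := by
    field_simp
  rw [e1]
  apply div_le_div₀ hm (by linarith) (by positivity)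
  exact pow_le_pow_left₀ hε.le hεr 2

noncomputable def BLD2 (m : ℝ) (c e y : E) : E →L[ℝ] ℝ :=
  (-(m / 2)) • ((-3 * (‖y - c‖ ^ 5)⁻¹ * ⟪y - c, e⟫) • innerSL ℝ (y - c)
    + (‖y - c‖ ^ 3)⁻¹ • innerSL ℝ e)

lemma BLD2_hasFDerivAt (m : ℝ) (e : E) {c y : E} (h : y ≠ c) :
    HasFDerivAt (fun z => BLD m c z e) (BLD2 m c e y) y := by
  have h1 := (auxB e h).const_mul (-(m / 2))
  have hfun : (fun z : E => -(m / 2) * ((‖z - c‖ ^ 3)⁻¹ * ⟪z - c, e⟫))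
      = fun z => BLD m c z e := by
    funext z; rw [BLD_apply]; ring
  rw [hfun] at h1
  exact h1

lemma BLD2_norm_le {m ε : ℝ} (hm : 0 ≤ m) {c e y : E} (he : ‖e‖ = 1)
    (hε : 0 < ε) (hεr : ε ≤ ‖y - c‖) :
    ‖BLD2 m c e y‖ ≤ 2 * (m / ε ^ 3) := by
  have hr : (0:ℝ) < ‖y - c‖ := lt_of_lt_of_le hε hεr
  have hA : |⟪y - c, e⟫| ≤ ‖y - c‖ := by
    calc |⟪y - c, e⟫| ≤ ‖y - c‖ * ‖e‖ := abs_real_inner_le_norm _ _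
    _ = ‖y - c‖ := by rw [he, mul_one]
  rw [BLD2, norm_smul (β := E →L[ℝ] ℝ) _ _]
  have h2 : ‖(-3 * (‖y - c‖ ^ 5)⁻¹ * ⟪y - c, e⟫) • innerSL ℝ (y - c)
      + (‖y - c‖ ^ 3)⁻¹ • innerSL ℝ e‖ ≤ 4 * (‖y - c‖ ^ 3)⁻¹ := by
    apply le_trans (norm_add_le _ _)
    rw [norm_smul (β := E →L[ℝ] ℝ) _ _, norm_smul (β := E →L[ℝ] ℝ) _ _,
      innerSL_apply_norm, innerSL_apply_norm, he, mul_one,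
      Real.norm_eq_abs, Real.norm_eq_abs, abs_mul, abs_mul, abs_neg, abs_inv, abs_pow,
      abs_norm, abs_of_nonneg (by positivity : (0:ℝ) ≤ (‖y - c‖ ^ 3)⁻¹)]
    rw [(by norm_num : |(3:ℝ)| = 3)]
    have key : 3 * (‖y - c‖ ^ 5)⁻¹ * |⟪y - c, e⟫| * ‖y - c‖ ≤ 3 * (‖y - c‖ ^ 3)⁻¹ := by
      have h3 : 3 * (‖y - c‖ ^ 5)⁻¹ * |⟪y - c, e⟫| * ‖y - c‖
          ≤ 3 * (‖y - c‖ ^ 5)⁻¹ * ‖y - c‖ * ‖y - c‖ := by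
        have := mul_le_mul_of_nonneg_left hA (by positivity : (0:ℝ) ≤ 3 * (‖y - c‖ ^ 5)⁻¹)
        nlinarith [this, hr]
      have h4 : 3 * (‖y - c‖ ^ 5)⁻¹ * ‖y - c‖ * ‖y - c‖ = 3 * (‖y - c‖ ^ 3)⁻¹ := by
        field_simp
      linarith
    linarith
  calc ‖(-(m/2) : ℝ)‖ * ‖(-3 * (‖y - c‖ ^ 5)⁻¹ * ⟪y - c, e⟫) • innerSL ℝ (y - c)
      + (‖y - c‖ ^ 3)⁻¹ • innerSL ℝ e‖
      ≤ (m / 2) * (4 * (‖y - c‖ ^ 3)⁻¹) := by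
        rw [Real.norm_eq_abs, abs_neg, abs_of_nonneg (by positivity : (0:ℝ) ≤ m / 2)]
        exact mul_le_mul_of_nonneg_left h2 (by positivity)
    _ = 2 * (m / ‖y - c‖ ^ 3) := by field_simp; ring
    _ ≤ 2 * (m / ε ^ 3) := by
        have : ε ^ 3 ≤ ‖y - c‖ ^ 3 := pow_le_pow_left₀ hε.le hεr 3
        have := div_le_div₀ hm (le_refl m) (by positivity : (0:ℝ) < ε ^ 3) this
        linarith

lemma sq_sum_inner (w : EuclideanSpace ℝ (Fin 3)) :
    ∑ i : Fin 3, (⟪w, EuclideanSpace.single i (1:ℝ)⟫) ^ 2 = ‖w‖ ^ 2 := by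
  rw [EuclideanSpace.norm_eq, Real.sq_sqrt (by positivity)]
  refine Finset.sum_congr rfl fun i _ => ?_
  rw [EuclideanSpace.inner_single_right]
  simp [Real.norm_eq_abs, sq_abs]

lemma BLD2_lap {m : ℝ} {c y : EuclideanSpace ℝ (Fin 3)} (h : y ≠ c) :
    ∑ i : Fin 3, BLD2 m c (EuclideanSpace.single i 1) y (EuclideanSpace.single i 1) = 0 := by
  have hw : y - c ≠ 0 := sub_ne_zero.mpr h
  have hr : (0:ℝ) < ‖y - c‖ := norm_pos_iff.mpr hw
  have happ : ∀ i : Fin 3, BLD2 m c (EuclideanSpace.single i 1) y (EuclideanSpace.single i 1)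
      = (3 * (m/2) * (‖y - c‖ ^ 5)⁻¹) * (⟪y - c, EuclideanSpace.single i (1:ℝ)⟫)^2
        + (-(m/2) * (‖y - c‖ ^ 3)⁻¹) := by
    intro i
    have hii : (⟪EuclideanSpace.single i (1:ℝ), EuclideanSpace.single i (1:ℝ)⟫ : ℝ) = 1 := by
      rw [real_inner_self_eq_norm_sq, EuclideanSpace.norm_single]; norm_num
    rw [BLD2]
    simp only [ContinuousLinearMap.smul_apply, ContinuousLinearMap.add_apply,
      innerSL_apply_apply, smul_eq_mul, hii]
    ring
  rw [Finset.sum_congr rfl fun i _ => happ i, Finset.sum_add_distrib, ← Finset.mul_sum,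
    sq_sum_inner, Finset.sum_const]
  simp only [Finset.card_univ, Fintype.card_fin, nsmul_eq_mul, Nat.cast_ofNat]
  field_simp
  ring


end aux

/-- On `U = ℝ³ \ {c_k}`, the Euclidean Laplacian (sum of pure second
partial derivatives) of `log(v⁴)` equals `−4‖∇v‖²/v²`; in particular it is `≤ 0`,
i.e. `log(v⁴)` is superharmonic, where `v` is the Brill–Lindquist conformal
factor. -/
theorem log_conformal_factor_superharmonic
    (m : ℕ → ℝ) (c : ℕ → EuclideanSpace ℝ (Fin 3))
    (hm : ∀ k, 0 < m k)
    (hsep : ∀ i j, i ≠ j → (5 : ℝ) ≤ ‖c i - c j‖)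
    (hsum : Summable (fun k => m k / (1 + ‖c k‖)))
    (v : EuclideanSpace ℝ (Fin 3) → ℝ)
    (hv : v = fun x => 1 + ∑' k, m k / (2 * ‖x - c k‖)) :
    ∀ x : EuclideanSpace ℝ (Fin 3), (∀ k, x ≠ c k) →
      (∑ i : Fin 3,
          fderiv ℝ (fun y => fderiv ℝ (fun z => Real.log ((v z) ^ 4)) y
              (EuclideanSpace.single i 1)) x (EuclideanSpace.single i 1))
        = -4 * ‖gradient v x‖ ^ 2 / (v x) ^ 2 ∧
      (∑ i : Fin 3,
          fderiv ℝ (fun y => fderiv ℝ (fun z => Real.log ((v z) ^ 4)) y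
              (EuclideanSpace.single i 1)) x (EuclideanSpace.single i 1)) ≤ 0 := by
  classical
  intro x hx
  set e : Fin 3 → EuclideanSpace ℝ (Fin 3) := fun i => EuclideanSpace.single i (1:ℝ) with he
  set R := ‖x‖ with hR
  have hR0 : (0:ℝ) ≤ R := norm_nonneg x
  -- finitely many centers near x
  have hSfin : {k : ℕ | ‖c k‖ ≤ R + 4}.Finite := by
    have h2 : TotallyBounded (Metric.closedBall (0 : EuclideanSpace ℝ (Fin 3)) (R + 4)) :=
      (isCompact_closedBall _ _).totallyBounded
    obtain ⟨t, htf, hcov⟩ := Metric.totallyBounded_iff.mp h2 2 (by norm_num)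
    refine Set.Finite.subset (htf.biUnion
      (fun y (_ : y ∈ t) => ?_) : Set.Finite (⋃ y ∈ t, {k : ℕ | c k ∈ Metric.ball y 2})) ?_
    · refine Set.Subsingleton.finite (fun k1 h1 k2 h2 => ?_)
      by_contra hne
      have h5 := hsep k1 k2 hne
      have d1 : dist (c k1) y < 2 := Metric.mem_ball.mp h1
      have d2 : dist (c k2) y < 2 := Metric.mem_ball.mp h2
      have : dist (c k1) (c k2) < 4 := by
        calc dist (c k1) (c k2) ≤ dist (c k1) y + dist y (c k2) := dist_triangle _ _ _
          _ < 4 := by rw [dist_comm y (c k2)] at *; linarith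
      rw [dist_eq_norm] at this; linarith
    · intro k hk
      have : c k ∈ Metric.closedBall (0 : EuclideanSpace ℝ (Fin 3)) (R + 4) := by
        rw [Metric.mem_closedBall, dist_zero_right]; exact hk
      have := hcov this
      simp only [Set.mem_iUnion] at this ⊢
      obtain ⟨y, hy, hball⟩ := this
      exact ⟨y, hy, hball⟩
  -- the minimal distance to nearby centers
  obtain ⟨d, hd0, hd1, hdS⟩ : ∃ d : ℝ, 0 < d ∧ d ≤ 1 ∧ ∀ k, ‖c k‖ ≤ R + 4 → d ≤ ‖x - c k‖ := by
    set T : Finset ℝ := insert (1:ℝ) (hSfin.toFinset.image fun k => ‖x - c k‖) with hT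
    have hTne : T.Nonempty := ⟨1, Finset.mem_insert_self _ _⟩
    refine ⟨T.min' hTne, ?_, T.min'_le 1 (Finset.mem_insert_self _ _), fun k hk => ?_⟩
    · have hmem := T.min'_mem hTne
      rcases Finset.mem_insert.mp hmem with h | h
      · exact lt_of_lt_of_eq one_pos h.symm
      · obtain ⟨k, hk, hkeq⟩ := Finset.mem_image.mp h
        rw [← hkeq]
        exact norm_pos_iff.mpr (sub_ne_zero.mpr (hx k))
    · exact T.min'_le _ (Finset.mem_insert_of_mem
        (Finset.mem_image.mpr ⟨k, hSfin.mem_toFinset.mpr hk, rfl⟩))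
  set s : Set (EuclideanSpace ℝ (Fin 3)) := Metric.ball x (d / 2) with hs
  have hxs : x ∈ s := Metric.mem_ball_self (by linarith)
  have hso : IsOpen s := Metric.isOpen_ball
  have hsc : IsPreconnected s := (convex_ball x (d / 2)).isPreconnected
  set ε : ℕ → ℝ := fun k => if ‖c k‖ ≤ R + 4 then d / 2 else (1 + ‖c k‖) / (R + 3) with hε
  have hε0 : ∀ k, 0 < ε k := by
    intro k; rw [hε]; dsimp only; split_ifs with h
    · linarith
    · push_neg at h; apply div_pos <;> [linarith [norm_nonneg (c k)]; linarith]
  have hεr : ∀ k, ∀ y ∈ s, ε k ≤ ‖y - c k‖ := by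
    intro k y hy
    have hyx : ‖y - x‖ < d / 2 := by
      rw [hs, Metric.mem_ball, dist_eq_norm] at hy; exact hy
    rw [hε]; dsimp only; split_ifs with hk
    · have h1 : d ≤ ‖x - c k‖ := hdS k hk
      have h2 : ‖x - c k‖ ≤ ‖x - y‖ + ‖y - c k‖ := by
        calc ‖x - c k‖ = ‖(x - y) + (y - c k)‖ := by rw [sub_add_sub_cancel]
          _ ≤ ‖x - y‖ + ‖y - c k‖ := norm_add_le _ _
      rw [norm_sub_rev x y] at h2
      linarith
    · push_neg at hk
      have h3 : ‖y‖ ≤ R + ‖y - x‖ := by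
        have hxy : x + (y - x) = y := by abel
        calc ‖y‖ = ‖x + (y - x)‖ := by rw [hxy]
          _ ≤ R + ‖y - x‖ := norm_add_le _ _
      have h4 : ‖c k‖ - ‖y‖ ≤ ‖y - c k‖ := by
        rw [norm_sub_rev]; exact norm_sub_norm_le _ _
      rw [div_le_iff₀ (by linarith : (0:ℝ) < R + 3)]
      nlinarith
  have hne : ∀ k, ∀ y ∈ s, y ≠ c k := by
    intro k y hy h
    have h1 := hεr k y hy
    have h2 := hε0 k
    rw [h, sub_self, norm_zero] at h1
    linarith
  have hkey : ∀ p : ℕ, 1 ≤ p → Summable (fun k => m k / ε k ^ p) := by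
    intro p hp
    have h1 : Summable (fun k => if ‖c k‖ ≤ R + 4 then (0:ℝ) else m k / ε k ^ p) := by
      refine Summable.of_nonneg_of_le (fun k => ?_) (fun k => ?_)
        (hsum.mul_left ((R + 3) ^ p))
      · split_ifs with h
        · exact le_rfl
        · have h1 := (hm k).le
          have h2 := hε0 k
          positivity
      · split_ifs with h
        · have := (hm k).le; positivity
        · push_neg at h
          rw [hε]; dsimp only; rw [if_neg (by linarith)]
          have hc1 : (0:ℝ) < 1 + ‖c k‖ := by linarith [norm_nonneg (c k)]
          rw [div_pow, div_div_eq_mul_div]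
          have hle : (1 + ‖c k‖) ≤ (1 + ‖c k‖) ^ p :=
            le_self_pow₀ (by linarith [norm_nonneg (c k)]) (by omega)
          calc m k * (R + 3) ^ p / (1 + ‖c k‖) ^ p
              ≤ m k * (R + 3) ^ p / (1 + ‖c k‖) := by
                apply div_le_div_of_nonneg_left _ hc1 hle
                have := (hm k).le; positivity
            _ = (R + 3) ^ p * (m k / (1 + ‖c k‖)) := by ring
    have h2 : Summable (fun k => if ‖c k‖ ≤ R + 4 then m k / ε k ^ p else 0) := by
      refine summable_of_ne_finset_zero (s := hSfin.toFinset) (fun k hk => ?_)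
      rw [if_neg]
      intro hmem
      exact hk (hSfin.mem_toFinset.mpr hmem)
    have h3 := h1.add h2
    convert h3 using 1
    funext k
    split_ifs <;> simp
  -- v is at least 1
  have hv1 : ∀ y, (1:ℝ) ≤ v y := by
    intro y
    rw [hv]
    have : (0:ℝ) ≤ ∑' k, m k / (2 * ‖y - c k‖) := by
      apply tsum_nonneg
      intro k
      have := (hm k).le
      positivity
    linarith
  have hvne : ∀ y, v y ≠ 0 := fun y => by have := hv1 y; linarith
  -- summability of the series at x
  have hsx : Summable (fun k => m k / (2 * ‖x - c k‖)) := by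
    refine Summable.of_nonneg_of_le (fun k => ?_) (fun k => ?_) (hkey 1 le_rfl)
    · have := (hm k).le; positivity
    · rw [pow_one]
      have h1 := hεr k x hxs
      have h2 := hε0 k
      have h3 : (0:ℝ) ≤ ‖x - c k‖ := norm_nonneg _
      exact div_le_div_of_nonneg_left (hm k).le h2 (by linarith)
  -- first-derivative bounds
  have hb1 : ∀ k, ∀ y ∈ s, ‖BLD (m k) (c k) y‖ ≤ m k / ε k ^ 2 :=
    fun k y hy => BLD_norm_le (hm k).le (hε0 k) (hεr k y hy)
  -- derivative of v
  have hvd : ∀ y ∈ s, HasFDerivAt v (∑' k, BLD (m k) (c k) y) y := by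
    intro y hy
    rw [hv]
    exact (hasFDerivAt_tsum_of_isPreconnected (hkey 2 (by norm_num)) hso hsc
      (fun k z hz => BLD_hasFDerivAt (m k) (hne k z hz))
      (fun k z hz => hb1 k z hz) hxs hsx hy).const_add 1
  have hDsum : ∀ y ∈ s, Summable (fun k => BLD (m k) (c k) y) := fun y hy =>
    Summable.of_norm_bounded (hkey 2 (by norm_num)) (fun k => hb1 k y hy)
  have hDvapp : ∀ y ∈ s, ∀ z, (∑' k, BLD (m k) (c k) y) z = ∑' k, BLD (m k) (c k) y z :=
    fun y hy z => (ContinuousLinearMap.apply ℝ ℝ z).map_tsum (hDsum y hy)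
  -- derivative of log (v^4)
  have hlog : ∀ y ∈ s, HasFDerivAt (fun z => Real.log ((v z) ^ 4))
      ((4 * (v y)⁻¹) • ∑' k, BLD (m k) (c k) y) y := by
    intro y hy
    have h2 := ((hvd y hy).log (hvne y)).const_mul (4:ℝ)
    have heq : (fun z => Real.log ((v z) ^ 4)) = fun z => 4 * Real.log (v z) := by
      funext z; rw [Real.log_pow]; norm_num
    rw [heq]
    rw [smul_smul] at h2
    exact h2
  have hei : ∀ i : Fin 3, ‖e i‖ = 1 := by
    intro i; rw [he]; dsimp only; rw [EuclideanSpace.norm_single]; norm_num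
  -- second-derivative bounds
  have hb2 : ∀ (i : Fin 3) k, ∀ y ∈ s, ‖BLD2 (m k) (c k) (e i) y‖ ≤ 2 * (m k / ε k ^ 3) :=
    fun i k y hy => BLD2_norm_le (hm k).le (hei i) (hε0 k) (hεr k y hy)
  -- summability of first partials at x
  have hsxg : ∀ i : Fin 3, Summable (fun k => BLD (m k) (c k) x (e i)) := by
    intro i
    refine Summable.of_norm_bounded (hkey 2 (by norm_num)) (fun k => ?_)
    calc ‖BLD (m k) (c k) x (e i)‖ ≤ ‖BLD (m k) (c k) x‖ * ‖e i‖ :=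
          ContinuousLinearMap.le_opNorm _ _
      _ = ‖BLD (m k) (c k) x‖ := by rw [hei i, mul_one]
      _ ≤ m k / ε k ^ 2 := hb1 k x hxs
  -- derivative of the series of first partials
  have hQ : ∀ i : Fin 3, HasFDerivAt (fun y => ∑' k, BLD (m k) (c k) y (e i))
      (∑' k, BLD2 (m k) (c k) (e i) x) x := fun i =>
    hasFDerivAt_tsum_of_isPreconnected ((hkey 3 (by norm_num)).mul_left 2) hso hsc
      (fun k y hy => BLD2_hasFDerivAt (m k) (e i) (hne k y hy))
      (fun k y hy => hb2 i k y hy) hxs (hsxg i) hxs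
  -- local identification of the inner fderiv
  have hee : ∀ i : Fin 3, (fun y => fderiv ℝ (fun z => Real.log ((v z) ^ 4)) y (e i))
      =ᶠ[nhds x] fun y => 4 * ((v y)⁻¹ * ∑' k, BLD (m k) (c k) y (e i)) := by
    intro i
    refine Filter.eventuallyEq_of_mem (hso.mem_nhds hxs) (fun y hy => ?_)
    rw [(hlog y hy).fderiv, ContinuousLinearMap.smul_apply, smul_eq_mul, hDvapp y hy (e i)]
    ring
  -- value of the outer derivative
  have houter : ∀ i : Fin 3,
      fderiv ℝ (fun y => fderiv ℝ (fun z => Real.log ((v z) ^ 4)) y (e i)) x (e i)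
      = 4 * ((v x)⁻¹ * ((∑' k, BLD2 (m k) (c k) (e i) x) (e i))
          + ((∑' k, BLD (m k) (c k) x) (e i))
            * (-((v x) ^ 2)⁻¹ * ((∑' k, BLD (m k) (c k) x) (e i)))) := by
    intro i
    have hinv : HasFDerivAt (fun y => (v y)⁻¹)
        ((-(v x ^ 2)⁻¹) • ∑' k, BLD (m k) (c k) x) x :=
      (hasDerivAt_inv (hvne x)).comp_hasFDerivAt x (hvd x hxs)
    have hmul : HasFDerivAt (fun y => 4 * ((v y)⁻¹ * ∑' k, BLD (m k) (c k) y (e i))) _ x :=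
      (hinv.mul (hQ i)).const_mul (4:ℝ)
    rw [(hee i).fderiv_eq, hmul.fderiv]
    rw [ContinuousLinearMap.smul_apply, ContinuousLinearMap.add_apply,
      ContinuousLinearMap.smul_apply, ContinuousLinearMap.smul_apply,
      ContinuousLinearMap.smul_apply]
    rw [hDvapp x hxs (e i)]
    simp only [smul_eq_mul]
    try ring
  -- the Laplacian of v vanishes
  have hlap : ∑ i : Fin 3, (∑' k, BLD2 (m k) (c k) (e i) x) (e i) = 0 := by
    have hap : ∀ i : Fin 3, (∑' k, BLD2 (m k) (c k) (e i) x) (e i)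
        = ∑' k, BLD2 (m k) (c k) (e i) x (e i) := fun i =>
      (ContinuousLinearMap.apply ℝ ℝ (e i)).map_tsum
        (Summable.of_norm_bounded ((hkey 3 (by norm_num)).mul_left 2)
          (fun k => hb2 i k x hxs))
    rw [Finset.sum_congr rfl fun i _ => hap i]
    have hsummable : ∀ i : Fin 3, Summable (fun k => BLD2 (m k) (c k) (e i) x (e i)) := by
      intro i
      refine Summable.of_norm_bounded (((hkey 3 (by norm_num)).mul_left 2).mul_right 1)
        (fun k => ?_)
      calc ‖BLD2 (m k) (c k) (e i) x (e i)‖ ≤ ‖BLD2 (m k) (c k) (e i) x‖ * ‖e i‖ :=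
            ContinuousLinearMap.le_opNorm _ _
        _ ≤ 2 * (m k / ε k ^ 3) * 1 := by
            rw [hei i]
            exact mul_le_mul_of_nonneg_right (hb2 i k x hxs) zero_le_one
    rw [← Summable.tsum_finsetSum (fun i _ => hsummable i)]
    have : ∀ k, ∑ i : Fin 3, BLD2 (m k) (c k) (e i) x (e i) = 0 := by
      intro k
      rw [he]
      exact BLD2_lap (hx k)
    rw [tsum_congr this, tsum_zero]
  -- the gradient norm
  have hgradnorm : ‖gradient v x‖ ^ 2
      = ∑ i : Fin 3, ((∑' k, BLD (m k) (c k) x) (e i)) ^ 2 := by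
    have hg : HasGradientAt v
        ((InnerProductSpace.toDual ℝ (EuclideanSpace ℝ (Fin 3))).symm
          (∑' k, BLD (m k) (c k) x)) x := (hvd x hxs).hasGradientAt
    rw [hg.gradient, ← sq_sum_inner]
    refine Finset.sum_congr rfl fun i _ => ?_
    rw [he]
    dsimp only
    rw [InnerProductSpace.toDual_symm_apply]
  -- assemble
  have hmain : ∑ i : Fin 3,
      fderiv ℝ (fun y => fderiv ℝ (fun z => Real.log ((v z) ^ 4)) y (e i)) x (e i)
      = -4 * ‖gradient v x‖ ^ 2 / (v x) ^ 2 := by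
    rw [Finset.sum_congr rfl fun i _ => houter i]
    have hterm : ∀ i : Fin 3,
        4 * ((v x)⁻¹ * ((∑' k, BLD2 (m k) (c k) (e i) x) (e i))
          + ((∑' k, BLD (m k) (c k) x) (e i))
            * (-((v x) ^ 2)⁻¹ * ((∑' k, BLD (m k) (c k) x) (e i))))
        = 4 * (v x)⁻¹ * ((∑' k, BLD2 (m k) (c k) (e i) x) (e i))
          + (-4 * ((v x) ^ 2)⁻¹) * ((∑' k, BLD (m k) (c k) x) (e i)) ^ 2 := by
      intro i; ring
    rw [Finset.sum_congr rfl fun i _ => hterm i, Finset.sum_add_distrib,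
      ← Finset.mul_sum, ← Finset.mul_sum, hlap, ← hgradnorm]
    have := hvne x
    field_simp
    ring
  exact ⟨hmain, by
    rw [hmain]
    apply div_nonpos_of_nonpos_of_nonneg
    · nlinarith [sq_nonneg ‖gradient v x‖]
    · positivity⟩
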